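/- arXiv:1401.6095 — 3 statements merged into one kernel-verified Lean document; each statement's English description precedes it below -/
import Mathlib

section
/- If a Hausdorff locally solid Riesz space (L, τ) has an order bounded τ-neighborhood of zero, then τ is metrizable. -/
open Topology Filter Pointwise Uniformity

/-- A subset of a lattice-ordered group is solid if `|x| ≤ |y|` and `y ∈ S` imply `x ∈ S`. -/
def IsSolidSet {L : Type*} [Lattice L] [AddCommGroup L] (S : Set L) : Prop :=
  ∀ x y : L, |x| ≤ |y| → y ∈ S → x ∈ S

/-- A Hausdorff locally solid Riesz space with an order bounded neighborhood of zero
is metrizable. -/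
theorem stmt_11 {L : Type*} [AddCommGroup L] [Lattice L] [Module ℝ L]
    [CovariantClass L L (· + ·) (· ≤ ·)] [PosSMulMono ℝ L]
    [TopologicalSpace L] [IsTopologicalAddGroup L] [ContinuousSMul ℝ L] [T2Space L]
    (hsolid : ∀ U ∈ 𝓝 (0 : L), ∃ S ∈ 𝓝 (0 : L), S ⊆ U ∧ IsSolidSet S)
    (hV : ∃ V ∈ 𝓝 (0 : L), ∃ u v : L, V ⊆ Set.Icc u v) :
    TopologicalSpace.MetrizableSpace L := by
  obtain ⟨V, hVnhds, u, v, hVuv⟩ := hV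
  set w : L := |u| ⊔ |v| with hw
  have hw0 : (0 : L) ≤ w := le_trans (abs_nonneg u) le_sup_left
  -- the candidate countable basis
  set s : ℕ → Set L := fun n => ((n : ℝ) + 1)⁻¹ • V with hs
  have hmem : ∀ n, s n ∈ 𝓝 (0 : L) := by
    intro n
    have hne : ((n : ℝ) + 1)⁻¹ ≠ 0 := by positivity
    rw [hs]
    rwa [set_smul_mem_nhds_zero_iff hne]
  -- abs bound for elements of V
  have habsV : ∀ y ∈ V, |y| ≤ w := by
    intro y hy
    rcases hVuv hy with ⟨h1, h2⟩
    refine abs_le'.mpr ⟨h2.trans ((le_abs_self v).trans le_sup_right), ?_⟩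
    calc -y ≤ -u := neg_le_neg_iff.mpr h1
      _ ≤ |u| := neg_le_abs u
      _ ≤ w := le_sup_left
  have hbasis : (𝓝 (0 : L)).HasBasis (fun _ : ℕ => True) s := by
    refine Filter.hasBasis_iff.mpr fun t => ⟨fun ht => ?_, fun ⟨n, _, hsub⟩ =>
      Filter.mem_of_superset (hmem n) hsub⟩
    obtain ⟨S, hSnhds, hSsub, hSsolid⟩ := hsolid t ht
    -- find n with (n+1)⁻¹ • w ∈ S
    have hc : Filter.Tendsto (fun c : ℝ => c • w) (𝓝 0) (𝓝 (0 : L)) := by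
      have : Continuous fun c : ℝ => c • w :=
        continuous_id.smul continuous_const
      simpa using this.tendsto 0
    have hS' : ∀ᶠ c : ℝ in 𝓝 0, c • w ∈ S := hc.eventually_mem hSnhds
    rcases Metric.eventually_nhds_iff.mp hS' with ⟨ε, hε, hball⟩
    obtain ⟨n, hn⟩ := exists_nat_one_div_lt hε
    have hpos : (0 : ℝ) < ((n : ℝ) + 1)⁻¹ := by positivity
    have hwS : ((n : ℝ) + 1)⁻¹ • w ∈ S := by
      apply hball
      rw [Real.dist_eq, sub_zero, abs_of_pos hpos]
      simpa [one_div] using hn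
    refine ⟨n, trivial, fun x hx => ?_⟩
    obtain ⟨y, hy, rfl⟩ := hx
    apply hSsub
    refine hSsolid _ _ ?_ hwS
    have hww : (0 : L) ≤ ((n : ℝ) + 1)⁻¹ • w := by
      have := smul_le_smul_of_nonneg_left hw0 hpos.le
      simpa using this
    rw [abs_of_nonneg hww]
    refine abs_le'.mpr ⟨?_, ?_⟩
    · exact smul_le_smul_of_nonneg_left ((le_abs_self y).trans (habsV y hy)) hpos.le
    · have h1 : -y ≤ w := (neg_le_abs y).trans (habsV y hy)
      simpa [smul_neg] using smul_le_smul_of_nonneg_left h1 hpos.le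
  haveI : (𝓝 (0 : L)).IsCountablyGenerated := hbasis.isCountablyGenerated
  letI : UniformSpace L := IsTopologicalAddGroup.rightUniformSpace L
  haveI : IsUniformAddGroup L := isUniformAddGroup_of_addCommGroup
  haveI : (𝓤 L).IsCountablyGenerated :=
    IsUniformAddGroup.uniformity_countably_generated
  exact UniformSpace.metrizableSpace
end

section
/- If a Hausdorff locally solid Riesz space (L, τ) has an order bounded convex τ-neighborhood of zero, then τ is normable. -/
open Topology

section Aux

variable {L : Type*} [AddCommGroup L] [Lattice L] [Module ℝ L]
  [CovariantClass L L (· + ·) (· ≤ ·)] [PosSMulMono ℝ L]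

lemma smul_sup_aux {t : ℝ} (ht : 0 < t) (a b : L) : t • (a ⊔ b) = t • a ⊔ t • b := by
  refine le_antisymm ?_ (sup_le (smul_le_smul_of_nonneg_left le_sup_left ht.le)
    (smul_le_smul_of_nonneg_left le_sup_right ht.le))
  have h : a ⊔ b ≤ t⁻¹ • (t • a ⊔ t • b) := by
    refine sup_le ?_ ?_
    · have := smul_le_smul_of_nonneg_left (le_sup_left : t • a ≤ t • a ⊔ t • b)
        (inv_nonneg.2 ht.le)
      rwa [inv_smul_smul₀ ht.ne'] at this
    · have := smul_le_smul_of_nonneg_left (le_sup_right : t • b ≤ t • a ⊔ t • b)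
        (inv_nonneg.2 ht.le)
      rwa [inv_smul_smul₀ ht.ne'] at this
  calc t • (a ⊔ b) ≤ t • (t⁻¹ • (t • a ⊔ t • b)) := smul_le_smul_of_nonneg_left h ht.le
    _ = t • a ⊔ t • b := smul_inv_smul₀ ht.ne' _

lemma abs_smul_aux (c : ℝ) (x : L) : |c • x| = |c| • |x| := by
  rcases lt_trichotomy c 0 with hc | rfl | hc
  · have h : |(-c) • x| = (-c) • |x| := by
      show (-c) • x ⊔ -((-c) • x) = (-c) • (x ⊔ -x)
      rw [smul_sup_aux (by linarith), smul_neg]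
    rw [abs_of_neg hc]
    calc |c • x| = |(-c) • x| := by rw [neg_smul, abs_neg]
      _ = (-c) • |x| := h
  · simp
  · rw [abs_of_pos hc]
    show c • x ⊔ -(c • x) = c • (x ⊔ -x)
    rw [smul_sup_aux hc, smul_neg]

lemma solid_balanced {S : Set L} (hS : IsSolidSet S) : Balanced ℝ S := by
  intro a ha
  rintro y ⟨x, hx, rfl⟩
  refine hS (a • x) x ?_ hx
  rw [abs_smul_aux]
  have h1 : (0 : L) ≤ (1 - |a|) • |x| := by
    refine smul_nonneg ?_ (abs_nonneg x)
    have : |a| ≤ 1 := by rwa [Real.norm_eq_abs] at ha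
    linarith
  rw [sub_smul, one_smul, sub_nonneg] at h1
  exact h1

lemma convex_Icc_aux (u v : L) : Convex ℝ (Set.Icc u v) := by
  rintro x ⟨hx1, hx2⟩ y ⟨hy1, hy2⟩ a b ha hb hab
  constructor
  · calc u = a • u + b • u := by rw [← add_smul, hab, one_smul]
      _ ≤ a • x + b • y :=
        add_le_add (smul_le_smul_of_nonneg_left hx1 ha) (smul_le_smul_of_nonneg_left hy1 hb)
  · calc a • x + b • y ≤ a • v + b • v :=
        add_le_add (smul_le_smul_of_nonneg_left hx2 ha) (smul_le_smul_of_nonneg_left hy2 hb)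
      _ = v := by rw [← add_smul, hab, one_smul]

end Aux

/-- A Hausdorff locally solid Riesz space with an order bounded convex neighborhood
of zero is normable: there is a norm whose balls form a neighborhood base at zero. -/
theorem stmt_12 {L : Type*} [AddCommGroup L] [Lattice L] [Module ℝ L]
    [CovariantClass L L (· + ·) (· ≤ ·)] [PosSMulMono ℝ L]
    [TopologicalSpace L] [IsTopologicalAddGroup L] [ContinuousSMul ℝ L] [T2Space L]
    (hsolid : ∀ U ∈ 𝓝 (0 : L), ∃ S ∈ 𝓝 (0 : L), S ⊆ U ∧ IsSolidSet S)
    (hV : ∃ V ∈ 𝓝 (0 : L), Convex ℝ V ∧ ∃ u v : L, V ⊆ Set.Icc u v) :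
    ∃ f : L → ℝ, (∀ x, 0 ≤ f x) ∧ (∀ x, f x = 0 ↔ x = 0) ∧
      (∀ (c : ℝ) (x : L), f (c • x) = |c| * f x) ∧
      (∀ x y : L, f (x + y) ≤ f x + f y) ∧
      (𝓝 (0 : L)).HasBasis (fun ε : ℝ => 0 < ε) (fun ε => {x : L | f x < ε}) := by
  classical
  obtain ⟨V, hVn, hVc, u, v, hVuv⟩ := hV
  obtain ⟨S, hSn, hSV, hSsolid⟩ := hsolid V hVn
  -- The order interval `Icc u v` is von Neumann bounded.
  have hIccBdd : Bornology.IsVonNBounded ℝ (Set.Icc u v) := by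
    intro U hU
    obtain ⟨S', hS'n, hS'U, hS'solid⟩ := hsolid U hU
    set w : L := |u| ⊔ |v| with hw_def
    have hw0 : (0 : L) ≤ w := (abs_nonneg u).trans le_sup_left
    have hw : ∀ x ∈ Set.Icc u v, |x| ≤ w := by
      rintro x ⟨hx1, hx2⟩
      have h1 : x ≤ w := hx2.trans ((le_abs_self v).trans le_sup_right)
      have h2 : -x ≤ w := (neg_le_neg_iff.mpr hx1).trans ((neg_le_abs u).trans le_sup_left)
      exact sup_le h1 h2
    have habs : Absorbs ℝ S' {w} := absorbent_nhds_zero hS'n w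
    have hAbs : Absorbs ℝ S' (Set.Icc u v) := by
      filter_upwards [habs.eventually, Bornology.eventually_ne_cobounded (0 : ℝ)]
        with c hc hc0 x hx
      have hwS' : c⁻¹ • w ∈ S' := by
        obtain ⟨s, hs, hcs⟩ := hc rfl
        rwa [show s = c⁻¹ • w by rw [← hcs, inv_smul_smul₀ hc0]] at hs
      refine ⟨c⁻¹ • x, ?_, smul_inv_smul₀ hc0 x⟩
      refine hS'solid _ _ ?_ hwS'
      calc |c⁻¹ • x| = |c⁻¹| • |x| := abs_smul_aux c⁻¹ x
        _ ≤ |c⁻¹| • w := smul_le_smul_of_nonneg_left (hw x hx) (abs_nonneg _)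
        _ = |c⁻¹| • |w| := by rw [abs_of_nonneg hw0]
        _ = |c⁻¹ • w| := (abs_smul_aux c⁻¹ w).symm
    exact hAbs.mono_left hS'U
  -- The set `W`: convex hull of the solid neighborhood `S`.
  set W : Set L := convexHull ℝ S with hW_def
  have hW0 : W ∈ 𝓝 (0 : L) := Filter.mem_of_superset hSn (subset_convexHull ℝ S)
  have hWc : Convex ℝ W := convex_convexHull ℝ S
  have hWbal : Balanced ℝ W := (solid_balanced hSsolid).convexHull
  have hWsub : W ⊆ Set.Icc u v :=
    convexHull_min (hSV.trans hVuv) (convex_Icc_aux u v)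
  have hWbdd : Bornology.IsVonNBounded ℝ W := hIccBdd.subset hWsub
  have hWabs : Absorbent ℝ W := absorbent_nhds_zero hW0
  refine ⟨gauge W, fun x => gauge_nonneg x, fun x => gauge_eq_zero hWabs hWbdd,
    fun c x => ?_, fun x y => gauge_add_le hWc hWabs x y, ?_⟩
  · rw [gauge_smul hWbal c x, Real.norm_eq_abs]
  · have hcomap := comap_gauge_nhds_zero hWbdd hW0
    rw [← hcomap]
    have hb : (𝓝 (0 : ℝ)).HasBasis (fun ε : ℝ => 0 < ε) (fun ε => {y : ℝ | |y| < ε}) :=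
      nhds_basis_zero_abs_lt ℝ
    refine (hb.comap (gauge W)).congr (fun ε => Iff.rfl) (fun ε hε => ?_)
    ext x
    simp only [Set.mem_preimage, Set.mem_setOf_eq,
      abs_of_nonneg (gauge_nonneg x)]
end

section
/- Let (L, τ) be a locally solid Riesz space and E ⊆ L. If every countable subset of E is order bounded, then E is τ-bounded. -/
open Topology Pointwise

lemma aux_smul_le_abs {L : Type*} [AddCommGroup L] [Lattice L] [Module ℝ L]
    [CovariantClass L L (· + ·) (· ≤ ·)] [PosSMulMono ℝ L]
    (a : ℝ) (z : L) : a • z ≤ |a| • |z| := by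
  rcases le_or_gt 0 a with ha | ha
  · rw [abs_of_nonneg ha]
    exact smul_le_smul_of_nonneg_left (le_abs_self z) ha
  · rw [abs_of_neg ha]
    have : a • z = (-a) • (-z) := by simp
    rw [this]
    exact smul_le_smul_of_nonneg_left (neg_le_abs z) (by linarith)

lemma aux_abs_smul_le {L : Type*} [AddCommGroup L] [Lattice L] [Module ℝ L]
    [CovariantClass L L (· + ·) (· ≤ ·)] [PosSMulMono ℝ L]
    (a : ℝ) (z : L) : |a • z| ≤ |a| • |z| := by
  rw [abs_le']
  refine ⟨aux_smul_le_abs a z, ?_⟩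
  have := aux_smul_le_abs (-a) z
  simpa using this

lemma aux_abs_smul_ge {L : Type*} [AddCommGroup L] [Lattice L] [Module ℝ L]
    [CovariantClass L L (· + ·) (· ≤ ·)] [PosSMulMono ℝ L]
    (a : ℝ) (w : L) : |a| • w ≤ |a • w| := by
  rcases le_or_gt 0 a with ha | ha
  · rw [abs_of_nonneg ha]; exact le_abs_self _
  · rw [abs_of_neg ha]
    have : (-a) • w = -(a • w) := by simp
    rw [this]
    exact neg_le_abs _

/-- In a locally solid Riesz space, if every countable subset of `E` is order bounded,
then `E` is topologically bounded. -/
theorem stmt_13 {L : Type*} [AddCommGroup L] [Lattice L] [Module ℝ L]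
    [CovariantClass L L (· + ·) (· ≤ ·)] [PosSMulMono ℝ L]
    [TopologicalSpace L] [IsTopologicalAddGroup L] [ContinuousSMul ℝ L]
    (hsolid : ∀ U ∈ 𝓝 (0 : L), ∃ S ∈ 𝓝 (0 : L), S ⊆ U ∧ IsSolidSet S)
    (E : Set L) (hE : ∀ C ⊆ E, C.Countable → ∃ u v : L, C ⊆ Set.Icc u v) :
    Bornology.IsVonNBounded ℝ E := by
  intro V hV
  obtain ⟨S, hS, hSV, hsol⟩ := hsolid V hV
  by_contra hcon
  have hS' : ¬ Absorbs ℝ S E := fun h' => hcon (h'.mono_left hSV)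
  rw [absorbs_iff_norm] at hS'
  push_neg at hS'
  -- pick sequences
  have hseq : ∀ n : ℕ, ∃ c : ℝ, (n : ℝ) + 1 ≤ ‖c‖ ∧ ∃ x ∈ E, x ∉ (c • S : Set L) := by
    intro n
    obtain ⟨c, hc, hns⟩ := hS' ((n : ℝ) + 1)
    exact ⟨c, hc, by rwa [Set.not_subset] at hns⟩
  choose c hc x hxE hxS using hseq
  -- the countable set of the x n is order bounded
  obtain ⟨u, v, huv⟩ := hE (Set.range x) (Set.range_subset_iff.2 hxE)
    (Set.countable_range x)
  set w : L := |u| ⊔ |v| with hw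
  have hxw : ∀ n, |x n| ≤ w := by
    intro n
    have hx : x n ∈ Set.Icc u v := huv ⟨n, rfl⟩
    rw [abs_le']
    constructor
    · exact hx.2.trans ((le_abs_self v).trans le_sup_right)
    · have h1 : -(x n) ≤ -u := by
        have := add_le_add_left hx.1 (-(x n) + -u)
        simpa [add_assoc, add_comm, add_left_comm] using this
      exact h1.trans ((neg_le_abs u).trans le_sup_left)
  have hcne : ∀ n, c n ≠ 0 := by
    intro n h
    have := hc n
    rw [h, norm_zero] at this
    have : (0:ℝ) < (n:ℝ) + 1 := by positivity
    linarith
  -- (c n)⁻¹ → 0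
  have htends : Filter.Tendsto (fun n => (c n)⁻¹ • w) Filter.atTop (𝓝 (0 : L)) := by
    have h1 : Filter.Tendsto (fun n : ℕ => ‖c n‖) Filter.atTop Filter.atTop :=
      Filter.tendsto_atTop_mono (fun n => hc n)
        (Filter.tendsto_atTop_add_const_right _ 1 tendsto_natCast_atTop_atTop)
    have h2 : Filter.Tendsto (fun n => (c n)⁻¹) Filter.atTop (𝓝 (0 : ℝ)) := by
      rw [tendsto_zero_iff_norm_tendsto_zero]
      simpa [norm_inv, Pi.inv_def] using h1.inv_tendsto_atTop
    simpa using h2.smul_const w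
  have hev : ∀ᶠ n in Filter.atTop, (c n)⁻¹ • w ∈ S := htends.eventually_mem hS
  obtain ⟨n, hn⟩ := hev.exists
  -- contradiction
  apply hxS n
  rw [Set.mem_smul_set_iff_inv_smul_mem₀ (hcne n)]
  apply hsol _ _ _ hn
  calc |(c n)⁻¹ • x n| ≤ |(c n)⁻¹| • |x n| := aux_abs_smul_le _ _
    _ ≤ |(c n)⁻¹| • w := smul_le_smul_of_nonneg_left (hxw n) (abs_nonneg _)
    _ ≤ |(c n)⁻¹ • w| := aux_abs_smul_ge _ _
end
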